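/- Let Q be a positive integer and let w₁, …, w_Q be complex numbers. For each Λ > 0, the estimate ∏_{j=1}^{Q} |z − w_j| ≥ Λ^Q holds for all z outside a finite union of discs having sum of radii at most 6Λ. -/

import Mathlib

open Finset

/-- `n ^ n ≤ 3 ^ n * n!` over the reals. -/
lemma pow_self_le_three_pow_mul_factorial (n : ℕ) :
    (n : ℝ) ^ n ≤ 3 ^ n * n.factorial := by
  have hfac : (0 : ℝ) < n.factorial := by positivity
  have h1 : (n : ℝ) ^ n / n.factorial ≤ Real.exp n := by
    calc (n : ℝ) ^ n / n.factorial
        ≤ ∑ i ∈ range (n + 1), (n : ℝ) ^ i / i.factorial := by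
          refine Finset.single_le_sum (f := fun i => (n : ℝ) ^ i / i.factorial)
            (fun i _ => by positivity) (self_mem_range_succ n)
      _ ≤ Real.exp n := Real.sum_le_exp_of_nonneg (by positivity) _
  have h2 : Real.exp n ≤ 3 ^ n := by
    have : Real.exp (n : ℝ) = Real.exp 1 ^ n := by
      rw [← Real.exp_nat_mul]; norm_num
    rw [this]
    exact pow_le_pow_left₀ (Real.exp_pos 1).le
      (by linarith [Real.exp_one_lt_d9]) n
  have := (div_le_iff₀ hfac).mp (h1.trans h2)
  linarith

/-- The greedy construction at the heart of Cartan's lemma. -/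
lemma cartan_core {Q : ℕ} (w : Fin Q → ℂ) (r : ℝ) (hr : 0 < r) :
    ∀ N : ℕ, ∀ s : Finset (Fin Q), s.card ≤ N →
    ∃ (k : ℕ) (c : Fin k → ℂ) (p : Fin k → ℕ),
      (∑ i, p i) ≤ s.card ∧
      ∀ z : ℂ, (∀ i, 2 * p i * r ≤ dist z (c i)) →
        ∀ m : ℕ, 1 ≤ m →
          (s.filter (fun j => dist z (w j) < m * r)).card < m := by
  classical
  intro N
  induction N with
  | zero =>
    intro s hs
    refine ⟨0, Fin.elim0, Fin.elim0, by simp, ?_⟩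
    intro z _ m hm
    have : s = ∅ := Finset.card_eq_zero.mp (Nat.le_zero.mp hs)
    subst this
    simp; omega
  | succ N ih =>
    intro s hs
    rcases s.eq_empty_or_nonempty with rfl | hne
    · refine ⟨0, Fin.elim0, Fin.elim0, by simp, ?_⟩
      intro z _ m hm
      simp; omega
    · -- greedy step
      set P : ℕ → Prop :=
        fun m => ∃ c : ℂ, m ≤ (s.filter fun j => dist (w j) c ≤ m * r).card with hPdef
      obtain ⟨j0, hj0⟩ := hne
      have hP1 : P 1 := by
        refine ⟨w j0, ?_⟩
        have hmem : j0 ∈ s.filter fun j => dist (w j) (w j0) ≤ (1 : ℕ) * r := by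
          simp [hj0, hr.le]
        exact Finset.card_pos.mpr ⟨j0, hmem⟩
      have hscard : 1 ≤ s.card := Finset.card_pos.mpr ⟨j0, hj0⟩
      set p : ℕ := Nat.findGreatest P s.card with hpdef
      have hp1 : 1 ≤ p := Nat.le_findGreatest hscard hP1
      have hpcard : p ≤ s.card := Nat.findGreatest_le _
      have hPp : P p := Nat.findGreatest_of_ne_zero rfl (by omega)
      obtain ⟨c0, hc0⟩ := hPp
      set t : Finset (Fin Q) := s.filter fun j => dist (w j) c0 ≤ p * r with htdef
      have ht_sub : t ⊆ s := Finset.filter_subset _ _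
      have htp : p ≤ t.card := hc0
      have hts : t.card ≤ s.card := Finset.card_le_card ht_sub
      set s' : Finset (Fin Q) := s \ t with hs'def
      have hs'card : s'.card = s.card - t.card := Finset.card_sdiff_of_subset ht_sub
      obtain ⟨k, c, q, hsum, hprop⟩ := ih s' (by omega)
      refine ⟨k + 1, Fin.cons c0 c, Fin.cons p q, ?_, ?_⟩
      · rw [Fin.sum_cons]
        omega
      · intro z hz m hm
        by_cases hmp : m ≤ p
        · -- all points of `t` are far from `z`
          have hzc : 2 * (p : ℝ) * r ≤ dist z c0 := by simpa using hz 0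
          have hsubset :
              s.filter (fun j => dist z (w j) < m * r) ⊆
              s'.filter (fun j => dist z (w j) < m * r) := by
            intro j hj
            rw [Finset.mem_filter] at hj
            rw [Finset.mem_filter, hs'def, Finset.mem_sdiff]
            refine ⟨⟨hj.1, ?_⟩, hj.2⟩
            intro hjt
            rw [htdef, Finset.mem_filter] at hjt
            have hmr : (m : ℝ) * r ≤ (p : ℝ) * r := by
              have : (m : ℝ) ≤ (p : ℝ) := Nat.cast_le.mpr hmp
              nlinarith
            have htri := dist_triangle z (w j) c0
            have hp0 : (0 : ℝ) < (p : ℝ) := by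
              exact_mod_cast Nat.lt_of_lt_of_le Nat.zero_lt_one hp1
            nlinarith [hj.2, hjt.2]
          have hz' : ∀ i, 2 * q i * r ≤ dist z (c i) := by
            intro i; simpa using hz i.succ
          exact lt_of_le_of_lt (Finset.card_le_card hsubset) (hprop z hz' m hm)
        · push_neg at hmp
          by_cases hms : m ≤ s.card
          · have hnP : ¬ P m := Nat.findGreatest_is_greatest hmp hms
            by_contra hcon
            push_neg at hcon
            apply hnP
            refine ⟨z, le_trans hcon (Finset.card_le_card ?_)⟩
            intro j hj
            rw [Finset.mem_filter] at hj ⊢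
            exact ⟨hj.1, by rw [dist_comm]; exact hj.2.le⟩
          · push_neg at hms
            exact lt_of_le_of_lt (Finset.card_filter_le _ _) hms

/-- **Cartan's lemma.** Given complex numbers `w₁, …, w_Q` and `Λ > 0`, the estimate
`∏ |z - wⱼ| ≥ Λ^Q` holds for all `z` outside a finite union of discs whose radii have
sum at most `6Λ`. -/
theorem cartan_lemma (Q : ℕ) (hQ : 0 < Q) (w : Fin Q → ℂ) (Λ : ℝ) (hΛ : 0 < Λ) :
    ∃ (m : ℕ) (c : Fin m → ℂ) (ρ : Fin m → ℝ),
      (∀ i, 0 ≤ ρ i) ∧ (∑ i, ρ i) ≤ 6 * Λ ∧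
      ∀ z : ℂ, z ∉ ⋃ i, Metric.ball (c i) (ρ i) →
        Λ ^ Q ≤ ∏ j, ‖z - w j‖ := by
  classical
  have hQR : (0 : ℝ) < (Q : ℝ) := by exact_mod_cast hQ
  set r : ℝ := 3 * Λ / Q with hrdef
  have hr : 0 < r := by positivity
  obtain ⟨k, c, p, hsum, hprop⟩ := cartan_core w r hr Q Finset.univ (by simp)
  refine ⟨k, c, fun i => 2 * p i * r, fun i => by positivity, ?_, ?_⟩
  · have hcast : ((∑ i, p i : ℕ) : ℝ) ≤ (Q : ℝ) := by
      exact_mod_cast hsum.trans (by simp)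
    have hsum' : (∑ i, (2 * (p i : ℝ) * r)) = 2 * r * ((∑ i, p i : ℕ) : ℝ) := by
      push_cast
      rw [Finset.mul_sum]
      exact Finset.sum_congr rfl fun i _ => by ring
    rw [hsum']
    calc 2 * r * ((∑ i, p i : ℕ) : ℝ) ≤ 2 * r * (Q : ℝ) := by nlinarith
      _ = 6 * Λ := by rw [hrdef]; field_simp; ring
  · intro z hz
    have hz' : ∀ i, 2 * p i * r ≤ dist z (c i) := by
      intro i
      by_contra h
      push_neg at h
      exact hz (Set.mem_iUnion.mpr ⟨i, Metric.mem_ball'.mpr (by rwa [dist_comm] at h)⟩)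
    have hcount := hprop z hz'
    set d : Fin Q → ℝ := fun j => dist z (w j) with hd
    set σ := Tuple.sort d with hσ
    have hmono : Monotone (d ∘ σ) := Tuple.monotone_sort d
    have key : ∀ i : Fin Q, ((i : ℕ) + 1 : ℝ) * r ≤ d (σ i) := by
      intro i
      by_contra h
      push_neg at h
      have hcnt := hcount ((i : ℕ) + 1) (Nat.le_add_left 1 _)
      have hsub : (Finset.Iic i).map σ.toEmbedding ⊆
          Finset.univ.filter (fun j => dist z (w j) < ((i : ℕ) + 1 : ℕ) * r) := by
        intro j hj
        rw [Finset.mem_map] at hj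
        obtain ⟨a, ha, rfl⟩ := hj
        rw [Finset.mem_Iic] at ha
        rw [Finset.mem_filter]
        refine ⟨Finset.mem_univ _, ?_⟩
        have : d (σ a) ≤ d (σ i) := hmono ha
        push_cast
        calc dist z (w (σ.toEmbedding a)) = d (σ a) := rfl
          _ ≤ d (σ i) := this
          _ < ((i : ℕ) + 1 : ℝ) * r := h
      have hcard := Finset.card_le_card hsub
      rw [Finset.card_map, Fin.card_Iic] at hcard
      omega
    have hprodeq : ∏ j, ‖z - w j‖ = ∏ j, d j := by
      refine Finset.prod_congr rfl fun j _ => ?_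
      rw [hd]; simp [Complex.dist_eq]
    rw [hprodeq, ← Equiv.prod_comp σ d]
    have hfac : ∏ i : Fin Q, (((i : ℕ) + 1 : ℝ) * r) = (Q.factorial : ℝ) * r ^ Q := by
      rw [Finset.prod_mul_distrib, Finset.prod_const, Finset.card_univ, Fintype.card_fin]
      congr 1
      rw [Fin.prod_univ_eq_prod_range (fun i => ((i : ℕ) + 1 : ℝ)) Q]
      rw [← Finset.prod_range_add_one_eq_factorial Q]
      push_cast
      rfl
    have hstep : Λ ^ Q ≤ ∏ i : Fin Q, (((i : ℕ) + 1 : ℝ) * r) := by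
      rw [hfac, hrdef]
      have hQQ := pow_self_le_three_pow_mul_factorial Q
      have hfacpos : (0 : ℝ) < Q.factorial := by positivity
      rw [div_pow, mul_pow]
      have hQpow : (0 : ℝ) < (Q : ℝ) ^ Q := by positivity
      rw [← mul_div_assoc, le_div_iff₀ hQpow]
      calc Λ ^ Q * (Q : ℝ) ^ Q ≤ Λ ^ Q * (3 ^ Q * Q.factorial) := by
            have : (0 : ℝ) ≤ Λ ^ Q := by positivity
            nlinarith
        _ = (Q.factorial : ℝ) * (3 ^ Q * Λ ^ Q) := by ring
    refine hstep.trans (Finset.prod_le_prod (fun i _ => by positivity) (fun i _ => key i))
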